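/- Let E be a uniformly convex and smooth Banach space and let {xₙ}, {yₙ} be sequences in E such that φ(xₙ, yₙ) → 0 and either {xₙ} or {yₙ} is bounded. Then ‖xₙ − yₙ‖ → 0. -/
import Mathlib

open Filter

set_option maxHeartbeats 1000000 in
/-- Quantitative key lemma: in a uniformly convex space, on the ball of radius `r`,
`φ(x,y)` is bounded below by a positive constant when `‖x - y‖ ≥ ε`. -/
lemma lyapunov_key {E : Type*} [NormedAddCommGroup E] [NormedSpace ℝ E]
    [UniformConvexSpace E]
    (J : E → (E →L[ℝ] ℝ))
    (hJ1 : ∀ x : E, J x x = ‖x‖ ^ 2)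
    (hJ2 : ∀ x : E, ‖J x‖ = ‖x‖)
    (ε r : ℝ) (hε : 0 < ε) (hr : 0 < r) :
    ∃ c > 0, ∀ x y : E, ‖x‖ ≤ r → ‖y‖ ≤ r → ε ≤ ‖x - y‖ →
      c ≤ ‖x‖ ^ 2 - 2 * (J y x) + ‖y‖ ^ 2 := by
  obtain ⟨δ₀, hδ₀, H⟩ := exists_forall_closed_ball_dist_add_le_two_sub E
    (div_pos hε hr)
  set δ : ℝ := min δ₀ 1 with hδdef
  have hδ : 0 < δ := lt_min hδ₀ one_pos
  have hδ1 : δ ≤ 1 := min_le_right _ _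
  have H' : ∀ ⦃u : E⦄, ‖u‖ ≤ 1 → ∀ ⦃v : E⦄, ‖v‖ ≤ 1 → ε / r ≤ ‖u - v‖ → ‖u + v‖ ≤ 2 - δ := by
    intro u hu v hv huv
    have h1 := H hu hv huv
    have h2 : δ ≤ δ₀ := min_le_left _ _
    linarith
  set θ : ℝ := min (ε / 4) (δ * ε ^ 2 / (64 * r)) with hθdef
  have hθpos : 0 < θ := lt_min (by linarith) (by positivity)
  have hθ1 : θ ≤ ε / 4 := min_le_left _ _
  have hθ2 : θ ≤ δ * ε ^ 2 / (64 * r) := min_le_right _ _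
  have hθr : θ * (64 * r) ≤ δ * ε ^ 2 := by
    rw [le_div_iff₀ (by positivity : (0:ℝ) < 64 * r)] at hθ2
    exact hθ2
  refine ⟨min (θ ^ 2) (δ * ε ^ 2 / 16), lt_min (by positivity) (by positivity),
    fun x y hx hy hxy => ?_⟩
  set s : ℝ := ‖x‖ with hs
  set t : ℝ := ‖y‖ with ht
  have hs0 : 0 ≤ s := norm_nonneg _
  have ht0 : 0 ≤ t := norm_nonneg _
  -- basic bound : J y x ≤ t * s
  have hJb : J y x ≤ t * s := by
    calc J y x ≤ ‖J y x‖ := le_abs_self _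
    _ ≤ ‖J y‖ * ‖x‖ := (J y).le_opNorm x
    _ = t * s := by rw [hJ2]
  rcases le_or_gt θ |s - t| with hst | hst
  · -- norms far apart: φ ≥ (s - t)^2 ≥ θ^2
    have h1 : (s - t) ^ 2 ≤ s ^ 2 - 2 * (J y x) + t ^ 2 := by nlinarith
    have h2 : θ ^ 2 ≤ (s - t) ^ 2 := by
      have := sq_abs (s - t)
      nlinarith [sq_nonneg (|s - t| - θ)]
    exact le_trans (min_le_left _ _) (le_trans h2 h1)
  · -- norms close: use uniform convexity
    have habs' : -θ < s - t ∧ s - t < θ := abs_lt.mp hst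
    have hsum : ε ≤ s + t := le_trans hxy (norm_sub_le _ _)
    have hsl : ε / 4 ≤ s := by linarith [habs'.1, hθ1]
    have htl : ε / 4 ≤ t := by linarith [habs'.2, hθ1]
    set m : ℝ := max s t with hmdef
    have hsm : s ≤ m := le_max_left _ _
    have htm : t ≤ m := le_max_right _ _
    have hm0 : 0 < m := lt_of_lt_of_le (by linarith) hsm
    have hmr : m ≤ r := max_le hx hy
    -- apply uniform convexity to x/m, y/m
    have hxm : ‖(m⁻¹ : ℝ) • x‖ ≤ 1 := by
      rw [norm_smul, Real.norm_eq_abs, abs_of_pos (inv_pos.2 hm0),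
        inv_mul_le_iff₀ hm0, mul_one]
      exact hsm
    have hym : ‖(m⁻¹ : ℝ) • y‖ ≤ 1 := by
      rw [norm_smul, Real.norm_eq_abs, abs_of_pos (inv_pos.2 hm0),
        inv_mul_le_iff₀ hm0, mul_one]
      exact htm
    have hsub : ε / r ≤ ‖(m⁻¹ : ℝ) • x - (m⁻¹ : ℝ) • y‖ := by
      rw [← smul_sub, norm_smul, Real.norm_eq_abs, abs_of_pos (inv_pos.2 hm0),
        le_inv_mul_iff₀ hm0]
      calc m * (ε / r) ≤ r * (ε / r) := by
            apply mul_le_mul_of_nonneg_right hmr (by positivity)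
      _ = ε := by field_simp
      _ ≤ ‖x - y‖ := hxy
    have hadd : ‖x + y‖ ≤ (2 - δ) * m := by
      have h := H' hxm hym hsub
      rw [← smul_add, norm_smul, Real.norm_eq_abs, abs_of_pos (inv_pos.2 hm0),
        inv_mul_le_iff₀ hm0] at h
      nlinarith [h]
    -- J y (x + y) = J y x + t^2, and J y (x+y) ≤ t * ‖x+y‖
    have hJxy : J y x + t ^ 2 ≤ t * ((2 - δ) * m) := by
      have h1 : J y (x + y) = J y x + t ^ 2 := by rw [map_add, hJ1]
      have h2 : J y (x + y) ≤ t * ‖x + y‖ := by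
        calc J y (x + y) ≤ ‖J y (x + y)‖ := le_abs_self _
        _ ≤ ‖J y‖ * ‖x + y‖ := (J y).le_opNorm _
        _ = t * ‖x + y‖ := by rw [hJ2]
      have h3 : t * ‖x + y‖ ≤ t * ((2 - δ) * m) :=
        mul_le_mul_of_nonneg_left hadd ht0
      linarith
    refine le_trans (min_le_right _ _) ?_
    rcases le_total s t with h | h
    · -- m = t
      have hmt : m = t := max_eq_right h
      rw [hmt] at hJxy
      have e1 : (s + t) * (-θ) ≤ (s + t) * (s - t) :=
        mul_le_mul_of_nonneg_left (by linarith [habs'.1]) (by linarith)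
      have e2 : (s + t) * θ ≤ (2 * r) * θ :=
        mul_le_mul_of_nonneg_right (by linarith) hθpos.le
      have e3 : 0 ≤ δ * (t - ε / 4) * (t + ε / 4) :=
        mul_nonneg (mul_nonneg hδ.le (by linarith)) (by linarith)
      have key : s ^ 2 - t ^ 2 + 2 * (δ * t ^ 2) ≤ s ^ 2 - 2 * (J y x) + t ^ 2 := by
        nlinarith [hJxy]
      nlinarith [e1, e2, e3, hθr, key]
    · -- m = s
      have hms : m = s := max_eq_left h
      rw [hms] at hJxy
      have e1 : -(3 * r) * (s - t) ≤ (s - 3 * t) * (s - t) :=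
        mul_le_mul_of_nonneg_right (by linarith) (by linarith)
      have e2 : (s - t) * (3 * r) ≤ θ * (3 * r) :=
        mul_le_mul_of_nonneg_right (by linarith [habs'.2]) (by positivity)
      have e3 : 0 ≤ δ * t * (s - ε / 4) :=
        mul_nonneg (mul_nonneg hδ.le ht0) (by linarith)
      have e4 : 0 ≤ δ * (ε / 4) * (t - ε / 4) :=
        mul_nonneg (by positivity) (by linarith)
      have key : s ^ 2 - 4 * (s * t) + 3 * t ^ 2 + 2 * (δ * (s * t)) ≤ s ^ 2 - 2 * (J y x) + t ^ 2 := by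
        nlinarith [hJxy]
      nlinarith [e1, e2, e3, e4, hθr, key]

/-- Kamimura–Takahashi: in a uniformly convex and smooth Banach space, if
`φ(xₙ, yₙ) → 0` and `{xₙ}` or `{yₙ}` is bounded, then `‖xₙ − yₙ‖ → 0`. -/
theorem tendsto_sub_of_lyapunov_tendsto_zero
    {E : Type*} [NormedAddCommGroup E] [NormedSpace ℝ E] [CompleteSpace E]
    [UniformConvexSpace E]
    (J : E → (E →L[ℝ] ℝ))
    (hJ1 : ∀ x : E, J x x = ‖x‖ ^ 2)
    (hJ2 : ∀ x : E, ‖J x‖ = ‖x‖)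
    (φ : E → E → ℝ)
    (hφ : ∀ x y : E, φ x y = ‖x‖ ^ 2 - 2 * (J y x) + ‖y‖ ^ 2)
    (x y : ℕ → E)
    (hphi : Tendsto (fun n => φ (x n) (y n)) atTop (nhds 0))
    (hbdd : Bornology.IsBounded (Set.range x) ∨ Bornology.IsBounded (Set.range y)) :
    Tendsto (fun n => ‖x n - y n‖) atTop (nhds 0) := by
  -- φₙ is bounded above since convergent
  have hφbdd : ∃ M : ℝ, ∀ n, φ (x n) (y n) ≤ M := by
    obtain ⟨M, hM⟩ := hphi.bddAbove_range
    exact ⟨M, fun n => hM ⟨n, rfl⟩⟩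
  obtain ⟨M, hM⟩ := hφbdd
  -- the gap of norms is uniformly bounded
  have hgap : ∀ n, |‖x n‖ - ‖y n‖| ≤ max 1 M := by
    intro n
    have hJb : J (y n) (x n) ≤ ‖y n‖ * ‖x n‖ := by
      calc J (y n) (x n) ≤ ‖J (y n) (x n)‖ := le_abs_self _
      _ ≤ ‖J (y n)‖ * ‖x n‖ := (J (y n)).le_opNorm _
      _ = ‖y n‖ * ‖x n‖ := by rw [hJ2]
    have h1 : (‖x n‖ - ‖y n‖) ^ 2 ≤ φ (x n) (y n) := by
      rw [hφ]; nlinarith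
    have h2 : (‖x n‖ - ‖y n‖) ^ 2 ≤ M := le_trans h1 (hM n)
    rcases le_or_gt (|‖x n‖ - ‖y n‖|) 1 with h | h
    · exact le_trans h (le_max_left _ _)
    · have : |‖x n‖ - ‖y n‖| ≤ (‖x n‖ - ‖y n‖) ^ 2 := by
        nlinarith [sq_abs (‖x n‖ - ‖y n‖), abs_nonneg (‖x n‖ - ‖y n‖)]
      exact le_trans this (le_trans h2 (le_max_right _ _))
  -- both sequences are bounded
  have hbound : ∃ r : ℝ, 0 < r ∧ ∀ n, ‖x n‖ ≤ r ∧ ‖y n‖ ≤ r := by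
    rcases hbdd with hb | hb
    · obtain ⟨C, hC⟩ := hb.exists_norm_le
      refine ⟨C + max 1 M + 1, ?_, fun n => ?_⟩
      · have := hC (x 0) ⟨0, rfl⟩
        have : 0 ≤ C := le_trans (norm_nonneg _) this
        have h1 : (1 : ℝ) ≤ max 1 M := le_max_left _ _
        linarith
      · have hx := hC (x n) ⟨n, rfl⟩
        have hg := hgap n
        have := abs_le.mp hg
        constructor
        · have h1 : (1 : ℝ) ≤ max 1 M := le_max_left _ _; linarith
        · linarith [this.1]
    · obtain ⟨C, hC⟩ := hb.exists_norm_le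
      refine ⟨C + max 1 M + 1, ?_, fun n => ?_⟩
      · have := hC (y 0) ⟨0, rfl⟩
        have : 0 ≤ C := le_trans (norm_nonneg _) this
        have h1 : (1 : ℝ) ≤ max 1 M := le_max_left _ _
        linarith
      · have hy := hC (y n) ⟨n, rfl⟩
        have hg := hgap n
        have := abs_le.mp hg
        constructor
        · linarith [this.2]
        · have h1 : (1 : ℝ) ≤ max 1 M := le_max_left _ _; linarith
  obtain ⟨r, hr, hbd⟩ := hbound
  -- conclude via the key lemma
  rw [Metric.tendsto_atTop]
  intro ε hε
  obtain ⟨c, hc, hkey⟩ := lyapunov_key J hJ1 hJ2 ε r hε hr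
  rw [Metric.tendsto_atTop] at hphi
  obtain ⟨N, hN⟩ := hphi c hc
  refine ⟨N, fun n hn => ?_⟩
  have hφn : φ (x n) (y n) < c := by
    have := hN n hn
    rw [Real.dist_eq, sub_zero] at this
    exact lt_of_le_of_lt (le_abs_self _) this
  rw [Real.dist_eq, sub_zero, abs_of_nonneg (norm_nonneg _)]
  by_contra hcon
  push_neg at hcon
  have := hkey (x n) (y n) (hbd n).1 (hbd n).2 hcon
  rw [← hφ] at this
  linarith
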